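/- Let {z_m} be a converging sequence of nonnegative reals with positive limit z. Then there exist a subsequence {z_{m_k}}, a strictly decreasing sequence {t_k} of positive reals with t_k → 0, and a convex function g : ℝ → ℝ such that g(t_k) = ±t_k · z_{m_k} · c for an appropriate constant c > 0 and sign depending on whether {z_{m_k}} is monotone nonincreasing or increasing and whether z < 1 or z > 1. -/

import Mathlib

open Filter

/-- Extraction lemma: if infinitely many terms lie strictly above the limit,
there is a strictly monotone subsequence whose values are strictly decreasing
and stay above the limit. -/
lemma exists_strictAnti_subseq (z : ℕ → ℝ) (zl : ℝ)
    (hconv : Filter.Tendsto z Filter.atTop (nhds zl))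
    (hS : {m | zl < z m}.Infinite) :
    ∃ φ : ℕ → ℕ, StrictMono φ ∧ StrictAnti (fun k => z (φ k)) ∧
      ∀ k, zl < z (φ k) := by
  have key : ∀ n : {m // zl < z m}, ∃ m' : {m // zl < z m},
      (n : ℕ) < (m' : ℕ) ∧ z m' < z n := by
    rintro ⟨n, hn⟩
    have hev : ∀ᶠ m in atTop, z m < z n := by
      have := hconv (Metric.ball_mem_nhds zl (by linarith : (0:ℝ) < z n - zl))
      filter_upwards [this] with m hm
      simp only [Set.mem_preimage, Metric.mem_ball, Real.dist_eq, abs_lt] at hm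
      linarith [hm.2]
    have hfreq : ∃ᶠ m in atTop, zl < z m := Nat.frequently_atTop_iff_infinite.mpr hS
    have := (hfreq.and_eventually (hev.and (eventually_gt_atTop n)))
    obtain ⟨m, hm1, hm2, hm3⟩ := this.exists
    exact ⟨⟨m, hm1⟩, hm3, hm2⟩
  choose F hF1 hF2 using key
  obtain ⟨n0, hn0⟩ := hS.nonempty
  set x0 : {m // zl < z m} := ⟨n0, hn0⟩
  refine ⟨fun k => (F^[k] x0 : ℕ), ?_, ?_, fun k => (F^[k] x0).2⟩
  · apply strictMono_nat_of_lt_succ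
    intro k
    rw [Function.iterate_succ_apply']
    exact hF1 _
  · apply strictAnti_nat_of_succ_lt
    intro k
    simp only
    rw [Function.iterate_succ_apply']
    exact hF2 _

lemma neg_convexOn : ConvexOn ℝ Set.univ (fun x : ℝ => -x) := by
  refine ⟨convex_univ, ?_⟩
  intro x _ y _ a b _ _ _
  apply le_of_eq
  simp only [smul_eq_mul]
  ring

/-- For any converging sequence of nonnegative reals with positive
limit, there exist a subsequence, a strictly decreasing positive null sequence
t_k and a convex function g with g (t k) = ± t k * z (φ k) * c for an
appropriate constant c > 0 and sign ε = ±1. -/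
theorem convex_interpolation_of_nonneg_sequence
    (z : ℕ → ℝ) (hnonneg : ∀ m, 0 ≤ z m)
    (zl : ℝ) (hconv : Filter.Tendsto z Filter.atTop (nhds zl)) (hzl : 0 < zl) :
    ∃ φ : ℕ → ℕ, StrictMono φ ∧
      ∃ t : ℕ → ℝ, StrictAnti t ∧ (∀ k, 0 < t k) ∧
        Filter.Tendsto t Filter.atTop (nhds 0) ∧
        ∃ c : ℝ, 0 < c ∧ ∃ ε : ℝ, (ε = 1 ∨ ε = -1) ∧
          ∃ g : ℝ → ℝ, ConvexOn ℝ Set.univ g ∧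
            ∀ k, g (t k) = ε * (t k * z (φ k) * c) := by
  -- one of the three sets is infinite
  have hcover : {m | z m = zl} ∪ {m | zl < z m} ∪ {m | z m < zl} = Set.univ := by
    ext m
    simp only [Set.mem_union, Set.mem_setOf_eq, Set.mem_univ, iff_true]
    rcases lt_trichotomy (z m) zl with h | h | h
    · exact Or.inr h
    · exact Or.inl (Or.inl h)
    · exact Or.inl (Or.inr h)
  have hinf : {m | z m = zl}.Infinite ∨ {m | zl < z m}.Infinite ∨
      {m | z m < zl}.Infinite := by
    by_contra h
    push_neg at h
    obtain ⟨h1, h2, h3⟩ := h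
    have : (Set.univ : Set ℕ).Finite := by
      rw [← hcover]
      exact (h1.union h2).union h3
    exact Set.infinite_univ this
  -- helper: powers of 1/2
  rcases hinf with hE | hA | hB
  · -- constant case: linear g
    refine ⟨Nat.nth {m | z m = zl}, Nat.nth_strictMono hE,
      fun k => (1/2 : ℝ)^k, ?_, fun k => by positivity, ?_,
      1, one_pos, 1, Or.inl rfl, fun x => zl * x, ?_, ?_⟩
    · exact fun a b hab => pow_lt_pow_right_of_lt_one₀ (by norm_num) (by norm_num) hab
    · exact tendsto_pow_atTop_nhds_zero_of_lt_one (by norm_num) (by norm_num)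
    · have := (convexOn_id (convex_univ (𝕜 := ℝ) (E := ℝ))).smul hzl.le
      simpa [smul_eq_mul] using this
    · intro k
      have hz : z (Nat.nth {m | z m = zl} k) = zl := Nat.nth_mem_of_infinite hE k
      rw [hz]; ring
  · -- above case: g x = x^2 + x
    obtain ⟨φ, hφ, hanti, habove⟩ := exists_strictAnti_subseq z zl hconv hA
    have hwconv : Filter.Tendsto (fun k => z (φ k)) Filter.atTop (nhds zl) :=
      hconv.comp (hφ.tendsto_atTop)
    refine ⟨φ, hφ, fun k => z (φ k) / zl - 1, ?_, ?_, ?_,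
      zl⁻¹, inv_pos.mpr hzl, 1, Or.inl rfl, fun x => x^2 + x, ?_, ?_⟩
    · intro a b hab
      have := hanti hab
      simp only at this ⊢
      have h2 : z (φ b) / zl < z (φ a) / zl := div_lt_div_of_pos_right this hzl
      linarith
    · intro k
      have := habove k
      have : 1 < z (φ k) / zl := (one_lt_div hzl).mpr this
      linarith
    · have h1 : Filter.Tendsto (fun k => z (φ k) / zl - 1) Filter.atTop
          (nhds (zl / zl - 1)) := (hwconv.div_const zl).sub_const 1
      have : zl / zl - 1 = 0 := by field_simp; norm_num
      rwa [this] at h1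
    · exact ((Even.convexOn_pow (by norm_num))).add
        (convexOn_id convex_univ)
    · intro k
      have hne : zl ≠ 0 := ne_of_gt hzl
      field_simp
      ring
  · -- below case: g x = x^2 - x, ε = -1
    have hA' : {m | -zl < (fun m => -z m) m}.Infinite := by
      have heq : {m | -zl < (fun m => -z m) m} = {m | z m < zl} := by
        ext m; simp
      rw [heq]; exact hB
    obtain ⟨φ, hφ, hanti, habove⟩ :=
      exists_strictAnti_subseq (fun m => -z m) (-zl) (hconv.neg) hA'
    have hbelow : ∀ k, z (φ k) < zl := by
      intro k
      have := habove k
      simpa using this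
    have hmono : StrictMono (fun k => z (φ k)) := by
      intro a b hab
      have := hanti hab
      simp only [neg_lt_neg_iff] at this
      exact this
    have hwconv : Filter.Tendsto (fun k => z (φ k)) Filter.atTop (nhds zl) :=
      hconv.comp (hφ.tendsto_atTop)
    refine ⟨φ, hφ, fun k => 1 - z (φ k) / zl, ?_, ?_, ?_,
      zl⁻¹, inv_pos.mpr hzl, -1, Or.inr rfl, fun x => x^2 - x, ?_, ?_⟩
    · intro a b hab
      have h := hmono hab
      have : z (φ a) / zl < z (φ b) / zl := div_lt_div_of_pos_right h hzl
      simp only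
      linarith
    · intro k
      have := hbelow k
      have : z (φ k) / zl < 1 := (div_lt_one hzl).mpr this
      linarith
    · have h1 : Filter.Tendsto (fun k => 1 - z (φ k) / zl) Filter.atTop
          (nhds (1 - zl / zl)) := (hwconv.div_const zl).const_sub 1
      have : 1 - zl / zl = 0 := by field_simp; norm_num
      rwa [this] at h1
    · have h2 : ConvexOn ℝ Set.univ (fun x : ℝ => x^2 + -x) :=
        ((Even.convexOn_pow (by norm_num))).add neg_convexOn
      simpa [sub_eq_add_neg] using h2
    · intro k
      have hne : zl ≠ 0 := ne_of_gt hzl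
      field_simp
      ring
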